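/- Lack of continuous dependence on the initial data: Let L > 0, ρ = μ = 1, let Φ₀ be the prototype adhesive potential, and let ε ∈ (0,1). Define u_ε(t,x) = εt + 1 + ε and v_ε(t,x) = (1−ε)·cos(√2·t). Then: (i) u_ε satisfies ∂²_t u_ε = −∂⁴ₓu_ε − Φ₀'(u_ε) pointwise for all t > 0 and 0 < x < L (note u_ε(t,x) > 1 so Φ₀'(u_ε) = 0), with initial data u_ε(0,x) = 1+ε, ∂_t u_ε(0,x) = ε; (ii) v_ε satisfies ∂²_t v_ε = −∂⁴ₓv_ε − Φ₀'(v_ε) pointwise for all t > 0 and 0 < x < L (note |v_ε(t,x)| ≤ 1−ε < 1 so Φ₀'(v_ε) = 2v_ε), with initial data v_ε(0,x) = 1−ε, ∂_t v_ε(0,x) = 0; both trivially satisfy the free-end boundary conditions; (iii) the distance of the initial data is ‖u_ε(0,·) − v_ε(0,·)‖_{L²(0,L)} + ‖∂_t u_ε(0,·) − ∂_t v_ε(0,·)‖_{L²(0,L)} = 3ε√L; and (iv) for every x ∈ [0,L], u_ε(t,x) → ∞ as t → ∞, while limsup_{t→∞} v_ε(t,x) = 1−ε. -/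

import Mathlib

open MeasureTheory Filter Set intervalIntegral Real

/-- The prototype adhesive force `Φ₀'(s) = 2s` for `|s| < 1`, `Φ₀'(s) = 0` for `|s| > 1`. -/
noncomputable def Phi0' (s : ℝ) : ℝ := if |s| < 1 then 2 * s else 0

private lemma iteratedDeriv_const' (n : ℕ) (c : ℝ) :
    iteratedDeriv (n+1) (fun _ : ℝ => c) = fun _ => 0 := by
  induction n generalizing c with
  | zero => funext x; simp [iteratedDeriv_succ]
  | succ n ih => rw [iteratedDeriv_succ', deriv_const']; exact ih 0

private lemma deriv_affine (ε : ℝ) : deriv (fun τ : ℝ => ε * τ + 1 + ε) = fun _ => ε := by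
  funext t
  have : HasDerivAt (fun τ : ℝ => ε * τ + 1 + ε) ε t := by
    simpa using (((hasDerivAt_id t).const_mul ε).add_const 1).add_const ε
  exact this.deriv

private lemma deriv_vcos (ε : ℝ) :
    deriv (fun τ : ℝ => (1-ε) * Real.cos (Real.sqrt 2 * τ))
      = fun t => (1-ε) * (-Real.sin (Real.sqrt 2 * t) * Real.sqrt 2) := by
  funext t
  have h1 : HasDerivAt (fun τ : ℝ => Real.sqrt 2 * τ) (Real.sqrt 2) t := by
    simpa using (hasDerivAt_id t).const_mul (Real.sqrt 2)
  exact (((Real.hasDerivAt_cos (Real.sqrt 2 * t)).comp t h1).const_mul (1-ε)).deriv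

private lemma deriv2_vcos (ε t : ℝ) :
    deriv (deriv (fun τ : ℝ => (1-ε) * Real.cos (Real.sqrt 2 * τ))) t
      = -2 * ((1-ε) * Real.cos (Real.sqrt 2 * t)) := by
  rw [deriv_vcos]
  have h1 : HasDerivAt (fun τ : ℝ => Real.sqrt 2 * τ) (Real.sqrt 2) t := by
    simpa using (hasDerivAt_id t).const_mul (Real.sqrt 2)
  have h2 : HasDerivAt (fun τ : ℝ => (1-ε) * (-Real.sin (Real.sqrt 2 * τ) * Real.sqrt 2))
      ((1-ε) * (-(Real.cos (Real.sqrt 2 * t) * Real.sqrt 2) * Real.sqrt 2)) t := by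
    have hs := ((Real.hasDerivAt_sin (Real.sqrt 2 * t)).comp t h1)
    have := ((hs.neg).mul_const (Real.sqrt 2)).const_mul (1-ε)
    simpa using this
  rw [h2.deriv]
  have h2' : Real.sqrt 2 * Real.sqrt 2 = 2 := Real.mul_self_sqrt (by norm_num)
  ring_nf
  rw [Real.sq_sqrt (by norm_num : (2:ℝ) ≥ 0)]
  ring

/-- **Lack of continuous dependence on the initial data.**  With `ρ = μ = 1` and the
prototype adhesive potential, the explicit solutions `u_ε(t,x) = εt + 1 + ε` (detached) and
`v_ε(t,x) = (1-ε) cos(√2 t)` (attached) of the adhesive beam equation have initial data at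
`L²`-distance `3ε√L`, yet `u_ε → ∞` while `limsup_{t→∞} v_ε = 1 - ε`. -/
theorem lack_of_continuous_dependence
    (L ε : ℝ) (hL : 0 < L) (hε : ε ∈ Ioo (0:ℝ) 1)
    (uε vε : ℝ → ℝ → ℝ)
    (huε : ∀ t x, uε t x = ε * t + 1 + ε)
    (hvε : ∀ t x, vε t x = (1 - ε) * Real.cos (Real.sqrt 2 * t)) :
    -- (i) u_ε solves the adhesive beam equation, with data (1+ε, ε)
    (∀ t ∈ Ioi (0:ℝ), ∀ x ∈ Ioo 0 L,
      1 < uε t x ∧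
      deriv (deriv (fun τ => uε τ x)) t
        = -(iteratedDeriv 4 (fun y => uε t y) x) - Phi0' (uε t x)) ∧
    (∀ x ∈ Icc 0 L, uε 0 x = 1 + ε ∧ deriv (fun τ => uε τ x) 0 = ε) ∧
    -- (ii) v_ε solves the adhesive beam equation, with data (1-ε, 0)
    (∀ t ∈ Ioi (0:ℝ), ∀ x ∈ Ioo 0 L,
      |vε t x| ≤ 1 - ε ∧
      deriv (deriv (fun τ => vε τ x)) t
        = -(iteratedDeriv 4 (fun y => vε t y) x) - Phi0' (vε t x)) ∧
    (∀ x ∈ Icc 0 L, vε 0 x = 1 - ε ∧ deriv (fun τ => vε τ x) 0 = 0) ∧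
    -- both trivially satisfy the free-end boundary conditions
    (∀ t ∈ Ioi (0:ℝ),
      iteratedDeriv 2 (fun y => uε t y) 0 = 0 ∧ iteratedDeriv 2 (fun y => uε t y) L = 0 ∧
      iteratedDeriv 3 (fun y => uε t y) 0 = 0 ∧ iteratedDeriv 3 (fun y => uε t y) L = 0 ∧
      iteratedDeriv 2 (fun y => vε t y) 0 = 0 ∧ iteratedDeriv 2 (fun y => vε t y) L = 0 ∧
      iteratedDeriv 3 (fun y => vε t y) 0 = 0 ∧ iteratedDeriv 3 (fun y => vε t y) L = 0) ∧
    -- (iii) L² distance of the initial data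
    (Real.sqrt (∫ x in (0:ℝ)..L, (uε 0 x - vε 0 x) ^ 2)
      + Real.sqrt (∫ x in (0:ℝ)..L,
          (deriv (fun τ => uε τ x) 0 - deriv (fun τ => vε τ x) 0) ^ 2)
      = 3 * ε * Real.sqrt L) ∧
    -- (iv) completely different long-time behavior
    (∀ x ∈ Icc 0 L,
      Tendsto (fun t => uε t x) atTop atTop ∧
      Filter.limsup (fun t => vε t x) atTop = 1 - ε) := by
  obtain ⟨hε0, hε1⟩ := hε
  have huf : ∀ x, (fun τ => uε τ x) = fun τ => ε * τ + 1 + ε := fun x => funext fun τ => huε τ x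
  have hvf : ∀ x, (fun τ => vε τ x) = fun τ => (1-ε) * Real.cos (Real.sqrt 2 * τ) :=
    fun x => funext fun τ => hvε τ x
  have hucx : ∀ t, (fun y => uε t y) = fun _ : ℝ => ε * t + 1 + ε := fun t => funext fun y => huε t y
  have hvcx : ∀ t, (fun y => vε t y) = fun _ : ℝ => (1-ε) * Real.cos (Real.sqrt 2 * t) :=
    fun t => funext fun y => hvε t y
  have hbd : ∀ t : ℝ, |(1-ε) * Real.cos (Real.sqrt 2 * t)| ≤ 1 - ε := by
    intro t
    rw [abs_mul, abs_of_nonneg (by linarith : (0:ℝ) ≤ 1 - ε)]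
    calc (1-ε) * |Real.cos (Real.sqrt 2 * t)| ≤ (1-ε) * 1 :=
          mul_le_mul_of_nonneg_left (Real.abs_cos_le_one _) (by linarith)
      _ = 1 - ε := mul_one _
  have hbd' : ∀ t : ℝ, (1-ε) * Real.cos (Real.sqrt 2 * t) ≤ 1 - ε :=
    fun t => (le_abs_self _).trans (hbd t)
  have hlb : ∀ t : ℝ, -(1-ε) ≤ (1-ε) * Real.cos (Real.sqrt 2 * t) :=
    fun t => (neg_abs_le _).trans' (neg_le_neg (hbd t))
  refine ⟨?_, ?_, ?_, ?_, ?_, ?_, ?_⟩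
  · -- (i) equation for uε
    intro t ht x hx
    have h1 : 1 < uε t x := by rw [huε]; nlinarith [mem_Ioi.mp ht]
    refine ⟨h1, ?_⟩
    have hphi : Phi0' (uε t x) = 0 := by
      unfold Phi0'
      rw [if_neg]
      rw [abs_of_pos (by linarith)]
      linarith
    rw [hucx, show (4:ℕ) = 3 + 1 from rfl, iteratedDeriv_const', hphi, huf, deriv_affine,
      deriv_const']
    norm_num
  · -- uε initial data
    intro x _
    constructor
    · rw [huε]; ring
    · rw [huf, deriv_affine]
  · -- (ii) equation for vε
    intro t ht x hx
    have habs' : |vε t x| ≤ 1 - ε := by rw [hvε]; exact hbd t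
    refine ⟨habs', ?_⟩
    have hphi : Phi0' (vε t x) = 2 * vε t x := by
      unfold Phi0'
      rw [if_pos (lt_of_le_of_lt habs' (by linarith))]
    rw [hvcx, show (4:ℕ) = 3 + 1 from rfl, iteratedDeriv_const', hphi, hvf, deriv2_vcos, hvε]
    ring
  · -- vε initial data
    intro x _
    constructor
    · rw [hvε]; simp
    · rw [hvf, deriv_vcos]; simp
  · -- boundary conditions
    intro t _
    rw [hucx, hvcx, show (3:ℕ) = 2 + 1 from rfl, show (2:ℕ) = 1 + 1 from rfl,
      iteratedDeriv_const', iteratedDeriv_const', iteratedDeriv_const', iteratedDeriv_const']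
    simp
  · -- (iii) distance of initial data
    have e1 : ∀ x : ℝ, (uε 0 x - vε 0 x) ^ 2 = (2*ε)^2 := by
      intro x; rw [huε, hvε]; simp; ring
    have e2 : ∀ x : ℝ, (deriv (fun τ => uε τ x) 0 - deriv (fun τ => vε τ x) 0) ^ 2 = ε^2 := by
      intro x; rw [huf, hvf, deriv_affine, deriv_vcos]; simp
    rw [intervalIntegral.integral_congr (fun x _ => e1 x),
        intervalIntegral.integral_congr (fun x _ => e2 x),
        intervalIntegral.integral_const, intervalIntegral.integral_const]
    have hsL : Real.sqrt L ^ 2 = L := Real.sq_sqrt hL.le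
    have g1 : (L - 0) • (2*ε)^2 = (2 * ε * Real.sqrt L)^2 := by
      rw [smul_eq_mul]; nlinarith [hsL]
    have g2 : (L - 0) • ε^2 = (ε * Real.sqrt L)^2 := by
      rw [smul_eq_mul]; nlinarith [hsL]
    rw [g1, g2, Real.sqrt_sq (by positivity), Real.sqrt_sq (by positivity)]
    ring
  · -- (iv) long-time behavior
    intro x _
    constructor
    · rw [huf]
      exact tendsto_atTop_add_const_right _ _
        (tendsto_atTop_add_const_right _ _ (tendsto_id.const_mul_atTop hε0))
    · rw [hvf]
      apply le_antisymm
      · apply Filter.limsup_le_of_le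
        · exact Filter.isCoboundedUnder_le_of_le atTop hlb
        · filter_upwards with t using hbd' t
      · apply Filter.le_limsup_of_frequently_le
        · rw [Filter.frequently_atTop]
          intro a
          obtain ⟨n, hn⟩ := exists_nat_ge (a * Real.sqrt 2 / (2 * Real.pi))
          have h2pos : (0:ℝ) < 2 * Real.pi := by positivity
          have hs2 : (0:ℝ) < Real.sqrt 2 := Real.sqrt_pos.mpr (by norm_num)
          refine ⟨(n : ℝ) * (2 * Real.pi) / Real.sqrt 2, ?_, ?_⟩
          · rw [le_div_iff₀ hs2]
            calc a * Real.sqrt 2 = a * Real.sqrt 2 / (2*Real.pi) * (2*Real.pi) := by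
                  field_simp
              _ ≤ (n:ℝ) * (2*Real.pi) := by
                  exact mul_le_mul_of_nonneg_right hn h2pos.le
          · have : Real.sqrt 2 * ((n:ℝ) * (2 * Real.pi) / Real.sqrt 2) = (n:ℝ) * (2 * Real.pi) := by
              field_simp
            rw [this, Real.cos_nat_mul_two_pi]
            linarith
        · exact Filter.isBoundedUnder_of ⟨1 - ε, fun t => hbd' t⟩
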